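/- arXiv:1604.07498 — 3 statements merged into one kernel-verified Lean document; each statement's English description precedes it below -/
import Mathlib

section
/- For a unit vector x = (x₀,x₁,x₂,x₃) ∈ ℂ⁴ with density matrix ρ = x xᴴ, the two partial traces Tr₀ρ and Tr₁ρ (2×2 matrices) have the same pair of eigenvalues, namely λ₀ = (1 - s)/2 and λ₁ = (1 + s)/2 where s = √(1 - 4|x₀x₃ - x₁x₂|²). -/
open Matrix Polynomial

private lemma charpoly_fin_two' (M : Matrix (Fin 2) (Fin 2) ℂ) :
    M.charpoly = X ^ 2 - C M.trace * X + C M.det := by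
  simp [Matrix.charpoly, Matrix.det_fin_two, Matrix.charmatrix_apply_eq,
    Matrix.charmatrix_apply_ne _ _ _ (by decide : (0 : Fin 2) ≠ 1),
    Matrix.charmatrix_apply_ne _ _ _ (by decide : (1 : Fin 2) ≠ 0),
    Matrix.trace_fin_two]
  ring

/-- For a unit vector x ∈ ℂ⁴ with density matrix ρ = x xᴴ, the two partial traces
have the same eigenvalues l₀ = (1-s)/2 and l₁ = (1+s)/2, s = √(1-4|x₀x₃-x₁x₂|²):
their characteristic polynomials both factor as (X - l₀)(X - l₁). -/
theorem stmt_14 (x₀ x₁ x₂ x₃ : ℂ)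
    (h : Complex.normSq x₀ + Complex.normSq x₁ + Complex.normSq x₂ + Complex.normSq x₃ = 1) :
    let c := starRingEnd ℂ
    let tr0 : Matrix (Fin 2) (Fin 2) ℂ :=
      !![x₀ * c x₀ + x₁ * c x₁, x₀ * c x₂ + x₁ * c x₃;
         x₂ * c x₀ + x₃ * c x₁, x₂ * c x₂ + x₃ * c x₃]
    let tr1 : Matrix (Fin 2) (Fin 2) ℂ :=
      !![x₀ * c x₀ + x₂ * c x₂, x₀ * c x₁ + x₂ * c x₃;
         x₁ * c x₀ + x₃ * c x₂, x₁ * c x₁ + x₃ * c x₃]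
    let s : ℝ := Real.sqrt (1 - 4 * Complex.normSq (x₀ * x₃ - x₁ * x₂))
    let l₀ : ℂ := (((1 - s) / 2 : ℝ) : ℂ)
    let l₁ : ℂ := (((1 + s) / 2 : ℝ) : ℂ)
    tr0.charpoly = (X - C l₀) * (X - C l₁) ∧
    tr1.charpoly = (X - C l₀) * (X - C l₁) := by
  intro c tr0 tr1 s l₀ l₁
  set d : ℝ := Complex.normSq (x₀ * x₃ - x₁ * x₂) with hdDef
  -- bound 4d ≤ 1
  have habs : ‖x₀ * x₃ - x₁ * x₂‖ ≤
      ‖x₀‖ * ‖x₃‖ + ‖x₁‖ * ‖x₂‖ := by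
    simpa [norm_mul] using norm_sub_le (x₀ * x₃) (x₁ * x₂)
  have hd1 : 4 * d ≤ 1 := by
    have ha := norm_nonneg x₀
    have hb := norm_nonneg x₁
    have hc := norm_nonneg x₂
    have hdd := norm_nonneg x₃
    have hsq : ∀ z : ℂ, ‖z‖ ^ 2 = Complex.normSq z := fun z => Complex.sq_norm z
    have h0 := hsq x₀; have h1 := hsq x₁; have h2 := hsq x₂; have h3 := hsq x₃
    have h4 := hsq (x₀ * x₃ - x₁ * x₂)
    rw [hdDef, ← h4]
    nlinarith [sq_nonneg (‖x₀‖ - ‖x₃‖),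
      sq_nonneg (‖x₁‖ - ‖x₂‖),
      norm_nonneg (x₀ * x₃ - x₁ * x₂),
      mul_self_nonneg (‖x₀‖ * ‖x₃‖ + ‖x₁‖ * ‖x₂‖)]
  have hs0 : 0 ≤ s := Real.sqrt_nonneg _
  have hs2 : s ^ 2 = 1 - 4 * d := by
    rw [show s = Real.sqrt (1 - 4 * d) from rfl, Real.sq_sqrt (by linarith)]
  -- sum and product of roots
  have hsum : l₀ + l₁ = 1 := by
    show (((1 - s) / 2 : ℝ) : ℂ) + (((1 + s) / 2 : ℝ) : ℂ) = 1
    push_cast; ring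
  have hprod : l₀ * l₁ = (d : ℂ) := by
    show (((1 - s) / 2 : ℝ) : ℂ) * (((1 + s) / 2 : ℝ) : ℂ) = (d : ℂ)
    have : (1 - s) / 2 * ((1 + s) / 2) = d := by nlinarith [hs2]
    push_cast [← this]; ring
  have hrhs : (X - C l₀) * (X - C l₁) = X ^ 2 - C (1 : ℂ) * X + C ((d : ℝ) : ℂ) := by
    have : (X - C l₀) * (X - C l₁) = X ^ 2 - C (l₀ + l₁) * X + C (l₀ * l₁) := by
      rw [C_add, C_mul]; ring
    rw [this, hsum, hprod]
  have htr : (x₀ * c x₀ + x₁ * c x₁) + (x₂ * c x₂ + x₃ * c x₃) = 1 := by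
    show (x₀ * (starRingEnd ℂ) x₀ + x₁ * (starRingEnd ℂ) x₁)
        + (x₂ * (starRingEnd ℂ) x₂ + x₃ * (starRingEnd ℂ) x₃) = 1
    rw [Complex.mul_conj, Complex.mul_conj, Complex.mul_conj, Complex.mul_conj]
    rw [show (Complex.normSq x₀ : ℂ) + (Complex.normSq x₁ : ℂ) +
      ((Complex.normSq x₂ : ℂ) + (Complex.normSq x₃ : ℂ))
      = ((Complex.normSq x₀ + Complex.normSq x₁ + Complex.normSq x₂ + Complex.normSq x₃ : ℝ) : ℂ)
      by push_cast; ring, h]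
    norm_num
  have htr' : (x₀ * c x₀ + x₂ * c x₂) + (x₁ * c x₁ + x₃ * c x₃) = 1 := by
    rw [← htr]; ring
  have hdetE : (x₀ * x₃ - x₁ * x₂) * (starRingEnd ℂ) (x₀ * x₃ - x₁ * x₂) = ((d : ℝ) : ℂ) := by
    rw [Complex.mul_conj]
  have hdet0 : (x₀ * c x₀ + x₁ * c x₁) * (x₂ * c x₂ + x₃ * c x₃)
      - (x₀ * c x₂ + x₁ * c x₃) * (x₂ * c x₀ + x₃ * c x₁) = ((d : ℝ) : ℂ) := by
    rw [← hdetE]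
    show (x₀ * (starRingEnd ℂ) x₀ + x₁ * (starRingEnd ℂ) x₁) * (x₂ * (starRingEnd ℂ) x₂ + x₃ * (starRingEnd ℂ) x₃)
      - (x₀ * (starRingEnd ℂ) x₂ + x₁ * (starRingEnd ℂ) x₃) * (x₂ * (starRingEnd ℂ) x₀ + x₃ * (starRingEnd ℂ) x₁) = _
    simp only [map_sub, _root_.map_mul]
    ring
  have hdet1 : (x₀ * c x₀ + x₂ * c x₂) * (x₁ * c x₁ + x₃ * c x₃)
      - (x₀ * c x₁ + x₂ * c x₃) * (x₁ * c x₀ + x₃ * c x₂) = ((d : ℝ) : ℂ) := by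
    rw [← hdetE]
    show (x₀ * (starRingEnd ℂ) x₀ + x₂ * (starRingEnd ℂ) x₂) * (x₁ * (starRingEnd ℂ) x₁ + x₃ * (starRingEnd ℂ) x₃)
      - (x₀ * (starRingEnd ℂ) x₁ + x₂ * (starRingEnd ℂ) x₃) * (x₁ * (starRingEnd ℂ) x₀ + x₃ * (starRingEnd ℂ) x₂) = _
    simp only [map_sub, _root_.map_mul]
    ring
  constructor
  · rw [charpoly_fin_two', hrhs]
    simp only [tr0, Matrix.trace_fin_two_of, Matrix.det_fin_two_of]
    rw [htr, hdet0]
  · rw [charpoly_fin_two', hrhs]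
    simp only [tr1, Matrix.trace_fin_two_of, Matrix.det_fin_two_of]
    rw [htr', hdet1]
end

section
/- If U is a 2×2 unitary matrix, then |t((U ⊗ I₂)x)| = |t(x)| = |t((I₂ ⊗ U)x)| for every x ∈ ℂ⁴, where t(x) = x₀x₃ - x₁x₂. Consequently the entanglement measure ν(x) = √(1 + 2|t(x)|) - 1 is invariant under local unitary operations. -/
open Matrix

lemma abs_det_one (U : Matrix (Fin 2) (Fin 2) ℂ) (hU : Uᴴ * U = 1) :
    ‖U 0 0 * U 1 1 - U 0 1 * U 1 0‖ = 1 := by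
  have h2 : ‖U.det‖ = 1 := by
    have h := congrArg Matrix.det hU
    rw [Matrix.det_mul, Matrix.det_one, Matrix.det_conjTranspose] at h
    have h3 : ‖star U.det * U.det‖ = ‖(1 : ℂ)‖ := by rw [h]
    rw [norm_mul, norm_one,
      show ‖star U.det‖ = ‖U.det‖ from norm_star U.det] at h3
    nlinarith [norm_nonneg U.det]
  rwa [Matrix.det_fin_two] at h2

/-- For unitary U, |t((U⊗I₂)x)| = |t(x)| = |t((I₂⊗U)x)|; hence the entanglement
measure ν(x) = √(1 + 2|t(x)|) - 1 is invariant under local unitaries. -/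
theorem stmt_17 (U : Matrix (Fin 2) (Fin 2) ℂ) (hU : Uᴴ * U = 1) (x₀ x₁ x₂ x₃ : ℂ) :
    let tL : ℂ := (U 0 0 * x₀ + U 0 1 * x₂) * (U 1 0 * x₁ + U 1 1 * x₃)
        - (U 0 0 * x₁ + U 0 1 * x₃) * (U 1 0 * x₀ + U 1 1 * x₂)
    let tR : ℂ := (U 0 0 * x₀ + U 0 1 * x₁) * (U 1 0 * x₂ + U 1 1 * x₃)
        - (U 1 0 * x₀ + U 1 1 * x₁) * (U 0 0 * x₂ + U 0 1 * x₃)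
    let t : ℂ := x₀ * x₃ - x₁ * x₂
    (‖tL‖ = ‖t‖ ∧ ‖tR‖ = ‖t‖) ∧
    (Real.sqrt (1 + 2 * ‖tL‖) - 1 = Real.sqrt (1 + 2 * ‖t‖) - 1 ∧
     Real.sqrt (1 + 2 * ‖tR‖) - 1 = Real.sqrt (1 + 2 * ‖t‖) - 1) := by
  intro tL tR t
  have hd := abs_det_one U hU
  have hL : tL = (U 0 0 * U 1 1 - U 0 1 * U 1 0) * t := by
    simp only [tL, t]; ring
  have hR : tR = (U 0 0 * U 1 1 - U 0 1 * U 1 0) * t := by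
    simp only [tR, t]; ring
  have haL : ‖tL‖ = ‖t‖ := by
    rw [hL, norm_mul, hd, one_mul]
  have haR : ‖tR‖ = ‖t‖ := by
    rw [hR, norm_mul, hd, one_mul]
  exact ⟨⟨haL, haR⟩, by rw [haL], by rw [haR]⟩
end

section
/- For a unit vector x ∈ ℂ⁴ with density matrix ρ = x xᴴ, the reduced von Neumann entropy E(Tr₀ρ) = -λ₀ log₂ λ₀ - λ₁ log₂ λ₁ (with λ₀, λ₁ the eigenvalues of Tr₀ρ) equals 0 if and only if x₀x₃ = x₁x₂, i.e., if and only if x is separable. -/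
lemma aux_det_bound (x₀ x₁ x₂ x₃ : ℂ)
    (h : Complex.normSq x₀ + Complex.normSq x₁ + Complex.normSq x₂ + Complex.normSq x₃ = 1) :
    4 * Complex.normSq (x₀ * x₃ - x₁ * x₂) ≤ 1 := by
  have habs : ‖x₀*x₃ - x₁*x₂‖ ≤
      ‖x₀‖ * ‖x₃‖ + ‖x₁‖ * ‖x₂‖ := by
    calc ‖x₀*x₃ - x₁*x₂‖ ≤ ‖x₀*x₃‖ + ‖x₁*x₂‖ :=
          by simpa using norm_sub_le (x₀*x₃) (x₁*x₂)
      _ = _ := by rw [norm_mul, norm_mul]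
  have h0 := Complex.sq_norm x₀
  have h1 := Complex.sq_norm x₁
  have h2 := Complex.sq_norm x₂
  have h3 := Complex.sq_norm x₃
  have he := Complex.sq_norm (x₀*x₃ - x₁*x₂)
  have hhalf : ‖x₀*x₃ - x₁*x₂‖ ≤ 1/2 := by
    nlinarith [sq_nonneg (‖x₀‖ - ‖x₃‖),
      sq_nonneg (‖x₁‖ - ‖x₂‖)]
  nlinarith [norm_nonneg (x₀*x₃ - x₁*x₂)]

lemma aux1 (x₀ x₁ x₂ x₃ : ℂ)
    (h : Complex.normSq x₀ + Complex.normSq x₁ + Complex.normSq x₂ + Complex.normSq x₃ = 1) :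
    (-( (1 - Real.sqrt (1 - 4 * Complex.normSq (x₀ * x₃ - x₁ * x₂)))/2 *
        Real.logb 2 ((1 - Real.sqrt (1 - 4 * Complex.normSq (x₀ * x₃ - x₁ * x₂)))/2))
      - (1 + Real.sqrt (1 - 4 * Complex.normSq (x₀ * x₃ - x₁ * x₂)))/2 *
        Real.logb 2 ((1 + Real.sqrt (1 - 4 * Complex.normSq (x₀ * x₃ - x₁ * x₂)))/2) = 0)
      ↔ x₀ * x₃ = x₁ * x₂ := by
  set d := Complex.normSq (x₀ * x₃ - x₁ * x₂) with hd
  have hd0 : 0 ≤ d := Complex.normSq_nonneg _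
  have hd1 : 4 * d ≤ 1 := aux_det_bound x₀ x₁ x₂ x₃ h
  constructor
  · intro hE
    by_contra hne
    have hdpos : 0 < d := by
      rcases lt_or_eq_of_le hd0 with h' | h'
      · exact h'
      · exact absurd (sub_eq_zero.mp (Complex.normSq_eq_zero.mp h'.symm)) hne
    set s := Real.sqrt (1 - 4*d) with hs
    have hs0 : 0 ≤ s := Real.sqrt_nonneg _
    have hs2 : s^2 = 1 - 4*d := Real.sq_sqrt (by linarith)
    have hs1 : s < 1 := by nlinarith
    have hl0 : 0 < (1 - s)/2 := by linarith
    have hl0' : (1 - s)/2 < 1 := by linarith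
    have hl1 : 0 < (1 + s)/2 := by linarith
    have hl1' : (1 + s)/2 < 1 := by linarith
    have hlog0 : Real.logb 2 ((1 - s)/2) < 0 := Real.logb_neg one_lt_two hl0 hl0'
    have hlog1 : Real.logb 2 ((1 + s)/2) < 0 := Real.logb_neg one_lt_two hl1 hl1'
    have t0 : (1 - s)/2 * Real.logb 2 ((1 - s)/2) < 0 := mul_neg_of_pos_of_neg hl0 hlog0
    have t1 : (1 + s)/2 * Real.logb 2 ((1 + s)/2) < 0 := mul_neg_of_pos_of_neg hl1 hlog1
    linarith [hE]
  · intro hdet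
    have : d = 0 := by rw [hd, sub_eq_zero.mpr hdet, Complex.normSq_zero]
    rw [this]
    norm_num

lemma aux2 (x₀ x₁ x₂ x₃ : ℂ)
    (h : Complex.normSq x₀ + Complex.normSq x₁ + Complex.normSq x₂ + Complex.normSq x₃ = 1) :
    x₀ * x₃ = x₁ * x₂ ↔ ∃ a₀ a₁ b₀ b₁ : ℂ,
        Complex.normSq a₀ + Complex.normSq a₁ = 1 ∧
        Complex.normSq b₀ + Complex.normSq b₁ = 1 ∧
        x₀ = a₀ * b₀ ∧ x₁ = a₀ * b₁ ∧ x₂ = a₁ * b₀ ∧ x₃ = a₁ * b₁ := by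
  constructor
  · intro hdet
    by_cases h0 : x₀ = 0
    · by_cases h1 : x₁ = 0
      · exact ⟨0, 1, x₂, x₃, by simp, by simpa [h0, h1] using h,
          by simp [h0], by simp [h1], by ring, by ring⟩
      · have h2 : x₂ = 0 := by
          have : x₁ * x₂ = 0 := by rw [← hdet, h0, zero_mul]
          rcases mul_eq_zero.mp this with h' | h'
          · exact absurd h' h1
          · exact h'
        exact ⟨x₁, x₃, 0, 1, by simpa [h0, h2] using h, by simp,
          by simp [h0], by ring, by simp [h2], by ring⟩
    · -- main case x₀ ≠ 0
      have hn0 : 0 < Complex.normSq x₀ := Complex.normSq_pos.mpr h0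
      set t : ℝ := Real.sqrt (Complex.normSq x₀ / (Complex.normSq x₀ + Complex.normSq x₂)) with ht
      have hden : 0 < Complex.normSq x₀ + Complex.normSq x₂ := by
        have := Complex.normSq_nonneg x₂; linarith
      have ht0 : 0 < t := Real.sqrt_pos.mpr (div_pos hn0 hden)
      have ht2 : t^2 = Complex.normSq x₀ / (Complex.normSq x₀ + Complex.normSq x₂) :=
        Real.sq_sqrt (le_of_lt (div_pos hn0 hden))
      have htc : (t : ℂ) ≠ 0 := by exact_mod_cast ht0.ne'
      have hkey : Complex.normSq x₁ * Complex.normSq x₂ = Complex.normSq x₀ * Complex.normSq x₃ := by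
        have := congrArg Complex.normSq hdet
        rw [Complex.normSq_mul, Complex.normSq_mul] at this
        linarith
      refine ⟨(t : ℂ), (t : ℂ) * x₂ / x₀, x₀ / (t : ℂ), x₁ / (t : ℂ), ?_, ?_, ?_, ?_, ?_, ?_⟩
      · rw [Complex.normSq_div, Complex.normSq_mul]
        have : Complex.normSq (t : ℂ) = t^2 := by
          rw [Complex.normSq_ofReal]; ring
        rw [this, ht2]
        field_simp
      · rw [Complex.normSq_div, Complex.normSq_div]
        have : Complex.normSq (t : ℂ) = t^2 := by
          rw [Complex.normSq_ofReal]; ring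
        rw [this, ht2]
        field_simp
        linear_combination Complex.normSq x₀ * h + hkey
      · field_simp
      · field_simp
      · field_simp
      · field_simp
        linear_combination hdet
  · rintro ⟨a₀, a₁, b₀, b₁, -, -, e0, e1, e2, e3⟩
    rw [e0, e1, e2, e3]; ring

/-- For a unit vector x ∈ ℂ⁴, the reduced von Neumann entropy
E = -λ₀ log₂ λ₀ - λ₁ log₂ λ₁ (eigenvalues λ₀ = (1-s)/2, λ₁ = (1+s)/2 of the partial
trace, s = √(1 - 4|x₀x₃-x₁x₂|²)) vanishes iff x₀x₃ = x₁x₂, iff x is separable. -/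
theorem stmt_19 (x₀ x₁ x₂ x₃ : ℂ)
    (h : Complex.normSq x₀ + Complex.normSq x₁ + Complex.normSq x₂ + Complex.normSq x₃ = 1) :
    let s : ℝ := Real.sqrt (1 - 4 * Complex.normSq (x₀ * x₃ - x₁ * x₂))
    let l₀ : ℝ := (1 - s) / 2
    let l₁ : ℝ := (1 + s) / 2
    let E : ℝ := -(l₀ * Real.logb 2 l₀) - l₁ * Real.logb 2 l₁
    (E = 0 ↔ x₀ * x₃ = x₁ * x₂) ∧
    (E = 0 ↔ ∃ a₀ a₁ b₀ b₁ : ℂ,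
        Complex.normSq a₀ + Complex.normSq a₁ = 1 ∧
        Complex.normSq b₀ + Complex.normSq b₁ = 1 ∧
        x₀ = a₀ * b₀ ∧ x₁ = a₀ * b₁ ∧ x₂ = a₁ * b₀ ∧ x₃ = a₁ * b₁) := by
  intro s l₀ l₁ E
  exact ⟨aux1 x₀ x₁ x₂ x₃ h, (aux1 x₀ x₁ x₂ x₃ h).trans (aux2 x₀ x₁ x₂ x₃ h)⟩
end
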